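/- Let g : E → ℝ be differentiable with ‖∇g(z)‖ ≤ M for all z ∈ E, where M ≥ 0, let N : ℝ → E satisfy ‖N(t)‖ ≤ 1 for all t, let f : E → E be Lipschitz with constant L > 0, and let ε > 0. Suppose x, y : ℝ → E satisfy, for all t ∈ [t₀, T], x′(t) = f(x(t)) and y′(t) = f(y(t)) + ε • (⟨∇g(y(t)), N(t)⟩ • N(t)). Then for every t ∈ [t₀, T], ‖x(t) − y(t)‖ ≤ ‖x(t₀) − y(t₀)‖ · e^{L(t−t₀)} + (εM/L)(e^{L(t−t₀)} − 1); in particular the perturbation term G(t) = ε⟨∇g(y(t)), N(t)⟩N(t) satisfies ‖G(t)‖ ≤ εM, so for small ε the modified flow behaves analogously to the original flow. -/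

import Mathlib

/-- The modified Equilibrium Flow stays close to the original flow: if `‖∇g‖ ≤ M`,
`‖N t‖ ≤ 1`, `f` is `L`-Lipschitz, `x′ = f ∘ x` and
`y′ t = f (y t) + ε • (⟨∇g (y t), N t⟩ • N t)` on `[t₀, T]`, then
`‖x t − y t‖ ≤ ‖x t₀ − y t₀‖ e^{L(t−t₀)} + (εM/L)(e^{L(t−t₀)} − 1)`, and the
perturbation `G t = ε ⟨∇g (y t), N t⟩ N t` satisfies `‖G t‖ ≤ ε M`. -/
theorem modified_equilibrium_flow_error_bound
    {E : Type*} [NormedAddCommGroup E] [InnerProductSpace ℝ E] [CompleteSpace E]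
    (g : E → ℝ) (hg : Differentiable ℝ g)
    (M : ℝ) (hM : 0 ≤ M) (hgM : ∀ z : E, ‖gradient g z‖ ≤ M)
    (N : ℝ → E) (hN : ∀ t : ℝ, ‖N t‖ ≤ 1)
    (f : E → E) (L : ℝ) (hL : 0 < L)
    (hf : ∀ a b : E, ‖f a - f b‖ ≤ L * ‖a - b‖)
    (ε : ℝ) (hε : 0 < ε) (t₀ T : ℝ)
    (x y : ℝ → E)
    (hx : ∀ t ∈ Set.Icc t₀ T, HasDerivAt x (f (x t)) t)
    (hy : ∀ t ∈ Set.Icc t₀ T,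
      HasDerivAt y (f (y t) + ε • ((inner ℝ (gradient g (y t)) (N t) : ℝ) • N t)) t) :
    (∀ t ∈ Set.Icc t₀ T,
      ‖x t - y t‖ ≤ ‖x t₀ - y t₀‖ * Real.exp (L * (t - t₀)) +
        (ε * M / L) * (Real.exp (L * (t - t₀)) - 1)) ∧
    (∀ t : ℝ, ‖ε • ((inner ℝ (gradient g (y t)) (N t) : ℝ) • N t)‖ ≤ ε * M) := by
  have hG : ∀ t : ℝ, ‖ε • ((inner ℝ (gradient g (y t)) (N t) : ℝ) • N t)‖ ≤ ε * M := by
    intro t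
    rw [norm_smul, norm_smul, Real.norm_eq_abs, Real.norm_eq_abs, abs_of_pos hε]
    calc ε * (|(inner ℝ (gradient g (y t)) (N t) : ℝ)| * ‖N t‖)
        ≤ ε * ((‖gradient g (y t)‖ * ‖N t‖) * ‖N t‖) := by
          gcongr
          exact abs_real_inner_le_norm _ _
      _ ≤ ε * ((M * 1) * 1) := by
          have h1 := hN t
          have h0 : (0:ℝ) ≤ ‖N t‖ := norm_nonneg _
          gcongr
          exact hgM _
      _ = ε * M := by ring
  refine ⟨?_, hG⟩
  intro t ht
  have key := norm_le_gronwallBound_of_norm_deriv_right_le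
    (f := fun t => x t - y t)
    (f' := fun t => f (x t) - (f (y t) + ε • ((inner ℝ (gradient g (y t)) (N t) : ℝ) • N t)))
    (δ := ‖x t₀ - y t₀‖) (K := L) (ε := ε * M) (a := t₀) (b := T)
    ?_ ?_ le_rfl ?_ t ht
  · rwa [gronwallBound_of_K_ne_0 hL.ne'] at key
  · intro s hs
    exact ((hx s hs).sub (hy s hs)).continuousAt.continuousWithinAt
  · intro s hs
    exact ((hx s (Set.Ico_subset_Icc_self hs)).sub
      (hy s (Set.Ico_subset_Icc_self hs))).hasDerivWithinAt
  · intro s hs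
    calc ‖f (x s) - (f (y s) + ε • ((inner ℝ (gradient g (y s)) (N s) : ℝ) • N s))‖
        ≤ ‖f (x s) - f (y s)‖ + ‖ε • ((inner ℝ (gradient g (y s)) (N s) : ℝ) • N s)‖ := by
          rw [sub_add_eq_sub_sub]
          exact norm_sub_le _ _
      _ ≤ L * ‖x s - y s‖ + ε * M := add_le_add (hf _ _) (hG s)
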